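/- Let f(n) denote the number of permutations w of {1,…,n} such that both w and w⁻¹ are alternating, and let f*(n) denote the number of permutations w of {1,…,n} such that w is alternating and w⁻¹ is reverse alternating. Then for every k ≥ 0, f*(2k+1) = f(2k+1). -/
import Mathlib


open scoped BigOperators

/-- A permutation `w` of `{0,…,n-1}` (as the word `w 0, w 1, …`) is alternating:
`a₁ > a₂ < a₃ > a₄ < ⋯`, i.e. the (0-indexed) descents are exactly the even positions. -/
def IsAltPerm {n : ℕ} (w : Equiv.Perm (Fin n)) : Prop :=
  ∀ i : ℕ, ∀ h : i + 1 < n, (w ⟨i + 1, h⟩ < w ⟨i, Nat.lt_of_succ_lt h⟩ ↔ Even i)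

/-- A permutation is reverse alternating: `a₁ < a₂ > a₃ < a₄ > ⋯`, i.e. the
(0-indexed) descents are exactly the odd positions. -/
def IsRevAltPerm {n : ℕ} (w : Equiv.Perm (Fin n)) : Prop :=
  ∀ i : ℕ, ∀ h : i + 1 < n, (w ⟨i + 1, h⟩ < w ⟨i, Nat.lt_of_succ_lt h⟩ ↔ Odd i)

/-- `f n`: number of `w` with both `w` and `w⁻¹` alternating. -/
noncomputable def doublyAlt (n : ℕ) : ℕ :=
  Nat.card {w : Equiv.Perm (Fin n) // IsAltPerm w ∧ IsAltPerm w⁻¹}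

/-- `f* n`: number of `w` with `w` alternating and `w⁻¹` reverse alternating. -/
noncomputable def mixedAlt (n : ℕ) : ℕ :=
  Nat.card {w : Equiv.Perm (Fin n) // IsAltPerm w ∧ IsRevAltPerm w⁻¹}

-- values at adjacent positions differ
lemma adj_ne {n : ℕ} (w : Equiv.Perm (Fin n)) (i : ℕ) (h : i + 1 < n) :
    w ⟨i + 1, h⟩ ≠ w ⟨i, Nat.lt_of_succ_lt h⟩ := by
  intro he
  have := w.injective he
  simp [Fin.ext_iff] at this

lemma revalt_of_alt {n : ℕ} (w : Equiv.Perm (Fin n)) (hw : IsAltPerm w) :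
    IsRevAltPerm ((Fin.revPerm : Equiv.Perm (Fin n)) * w) := by
  intro i h
  have h1 := hw i h
  have hne := adj_ne w i h
  have : ((Fin.revPerm : Equiv.Perm (Fin n)) * w) ⟨i + 1, h⟩ < ((Fin.revPerm : Equiv.Perm (Fin n)) * w) ⟨i, Nat.lt_of_succ_lt h⟩ ↔
      w ⟨i, Nat.lt_of_succ_lt h⟩ < w ⟨i + 1, h⟩ := by
    simp [Equiv.Perm.mul_apply, Fin.rev_lt_rev]
  rw [this]
  rcases lt_trichotomy (w ⟨i + 1, h⟩) (w ⟨i, Nat.lt_of_succ_lt h⟩) with hlt | heq | hgt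
  · have := h1.mp hlt
    simp [not_lt_of_gt hlt, Nat.not_odd_iff_even.mpr this]
  · exact absurd heq hne
  · have : ¬ Even i := fun he => absurd (h1.mpr he) (not_lt_of_gt hgt)
    simp [hgt, Nat.not_even_iff_odd.mp this]

lemma alt_of_revalt {n : ℕ} (w : Equiv.Perm (Fin n)) (hw : IsRevAltPerm w) :
    IsAltPerm ((Fin.revPerm : Equiv.Perm (Fin n)) * w) := by
  intro i h
  have h1 := hw i h
  have hne := adj_ne w i h
  have : ((Fin.revPerm : Equiv.Perm (Fin n)) * w) ⟨i + 1, h⟩ < ((Fin.revPerm : Equiv.Perm (Fin n)) * w) ⟨i, Nat.lt_of_succ_lt h⟩ ↔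
      w ⟨i, Nat.lt_of_succ_lt h⟩ < w ⟨i + 1, h⟩ := by
    simp [Equiv.Perm.mul_apply, Fin.rev_lt_rev]
  rw [this]
  rcases lt_trichotomy (w ⟨i + 1, h⟩) (w ⟨i, Nat.lt_of_succ_lt h⟩) with hlt | heq | hgt
  · have := h1.mp hlt
    simp [not_lt_of_gt hlt, Nat.not_even_iff_odd.mpr this]
  · exact absurd heq hne
  · have : ¬ Odd i := fun he => absurd (h1.mpr he) (not_lt_of_gt hgt)
    simp [hgt, Nat.not_odd_iff_even.mp this]

-- for odd n, right multiplication by rev preserves alternating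
lemma alt_mul_rev {k : ℕ} (w : Equiv.Perm (Fin (2 * k + 1))) (hw : IsAltPerm w) :
    IsAltPerm (w * (Fin.revPerm : Equiv.Perm (Fin (2 * k + 1)))) := by
  intro i h
  have hi : i < 2 * k := by omega
  set j := 2 * k - 1 - i with hj
  have hjh : j + 1 < 2 * k + 1 := by omega
  have e1 : (Fin.revPerm (⟨i + 1, h⟩ : Fin (2 * k + 1))) = ⟨j, Nat.lt_of_succ_lt hjh⟩ := by
    simp [Fin.rev, Fin.ext_iff]; omega
  have e2 : (Fin.revPerm (⟨i, Nat.lt_of_succ_lt h⟩ : Fin (2 * k + 1))) = ⟨j + 1, hjh⟩ := by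
    simp [Fin.rev, Fin.ext_iff]; omega
  have h1 := hw j hjh
  have hne := adj_ne w j hjh
  have key : (w * (Fin.revPerm : Equiv.Perm (Fin (2 * k + 1)))) ⟨i + 1, h⟩ < (w * (Fin.revPerm : Equiv.Perm (Fin (2 * k + 1)))) ⟨i, Nat.lt_of_succ_lt h⟩ ↔
      w ⟨j, Nat.lt_of_succ_lt hjh⟩ < w ⟨j + 1, hjh⟩ := by
    simp only [Equiv.Perm.mul_apply, e1, e2]
  rw [key]
  have hpar : (Odd j ↔ Even i) := by
    constructor
    · intro ho; rcases ho with ⟨m, hm⟩; exact ⟨k - 1 - m, by omega⟩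
    · intro he; rcases he with ⟨m, hm⟩;
      refine ⟨k - 1 - m, by omega⟩
  rcases lt_trichotomy (w ⟨j + 1, hjh⟩) (w ⟨j, Nat.lt_of_succ_lt hjh⟩) with hlt | heq | hgt
  · have hje := h1.mp hlt
    have : ¬ Even i := fun he => absurd (hpar.mpr he) (Nat.not_odd_iff_even.mpr hje)
    simp [not_lt_of_gt hlt, this]
  · exact absurd heq hne
  · have hjo : ¬ Even j := fun he => absurd (h1.mpr he) (not_lt_of_gt hgt)
    simp [hgt, hpar.mp (Nat.not_even_iff_odd.mp hjo)]


/-- For every k ≥ 0, f*(2k+1) = f(2k+1). -/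
theorem stmt_1 (k : ℕ) : mixedAlt (2 * k + 1) = doublyAlt (2 * k + 1) := by
  unfold mixedAlt doublyAlt
  apply Nat.card_congr
  have hinv : ∀ w : Equiv.Perm (Fin (2 * k + 1)),
      (w * (Fin.revPerm : Equiv.Perm (Fin (2 * k + 1))))⁻¹ = Fin.revPerm * w⁻¹ := by
    intro w
    rw [mul_inv_rev]
    congr 1
  have hcancel : ∀ w : Equiv.Perm (Fin (2 * k + 1)),
      w * Fin.revPerm * Fin.revPerm = w := by
    intro w
    ext x
    simp [Equiv.Perm.mul_apply]
  refine ⟨fun p => ⟨p.1 * Fin.revPerm, ?_, ?_⟩, fun p => ⟨p.1 * Fin.revPerm, ?_, ?_⟩, ?_, ?_⟩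
  · exact alt_mul_rev p.1 p.2.1
  · rw [hinv]; exact alt_of_revalt _ p.2.2
  · exact alt_mul_rev p.1 p.2.1
  · rw [hinv]; exact revalt_of_alt _ p.2.2
  · intro p; ext : 1; exact hcancel p.1
  · intro p; ext : 1; exact hcancel p.1
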